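/- If in the dual Orlicz-Brunn-Minkowski inequality the function F_φ(x₁,x₂) = φ(x₁^{-1/n}, x₂^{-1/n}) is strictly convex, then equality φ( (|K +̃_φ L|/|K|)^{1/n}, (|K +̃_φ L|/|L|)^{1/n} ) = 1 holds if and only if K and L are dilates of each other (L = λK for some λ > 0). -/

import Mathlib

/-- The class `Φ̃₂`: continuous on `[0,∞)²`, strictly increasing in each variable,
with `φ(0,0) = 0` and `φ(1,0) = φ(0,1) = 1`. -/
def IsPhi2 (φ : ℝ → ℝ → ℝ) : Prop :=
  ContinuousOn (fun p : ℝ × ℝ => φ p.1 p.2) (Set.Ici 0 ×ˢ Set.Ici 0) ∧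
  (∀ y : ℝ, 0 ≤ y → StrictMonoOn (fun x => φ x y) (Set.Ici 0)) ∧
  (∀ x : ℝ, 0 ≤ x → StrictMonoOn (fun y => φ x y) (Set.Ici 0)) ∧
  φ 0 0 = 0 ∧ φ 1 0 = 1 ∧ φ 0 1 = 1

noncomputable section

open Metric Set MeasureTheory Filter
open scoped Pointwise NNReal ENNReal

/-- A star body about the origin in `ℝⁿ`, represented by its radial function,
which is continuous and positive on the unit sphere. -/
structure StarBody (n : ℕ) where
  ρ : EuclideanSpace ℝ (Fin n) → ℝ
  pos : ∀ u : EuclideanSpace ℝ (Fin n), ‖u‖ = 1 → 0 < ρ u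
  cont : ContinuousOn ρ (sphere (0 : EuclideanSpace ℝ (Fin n)) 1)

/-- `M` is the Orlicz `φ`-radial addition `K +̃_φ L`, i.e.
`φ(ρ_M(u)/ρ_K(u), ρ_M(u)/ρ_L(u)) = 1` for all `u` on the unit sphere. -/
def IsOrliczSum {n : ℕ} (φ : ℝ → ℝ → ℝ) (K L M : StarBody n) : Prop :=
  ∀ u : EuclideanSpace ℝ (Fin n), ‖u‖ = 1 →
    φ (M.ρ u / K.ρ u) (M.ρ u / L.ρ u) = 1

/-- The spherical Lebesgue measure on the unit sphere `S^{n-1}`. -/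
def sphereMeasure (n : ℕ) : Measure (sphere (0 : EuclideanSpace ℝ (Fin n)) 1) :=
  (volume : Measure (EuclideanSpace ℝ (Fin n))).toSphere

/-- The volume of a star body via the polar coordinate formula
`|K| = (1/n) ∫_{S^{n-1}} ρ_K(u)ⁿ dσ(u)`. -/
def StarBody.vol {n : ℕ} (K : StarBody n) : ℝ :=
  (1 / (n : ℝ)) * ∫ u : sphere (0 : EuclideanSpace ℝ (Fin n)) 1,
    (K.ρ u) ^ n ∂(sphereMeasure n)

/-! ### Auxiliary lemmas -/

section Aux

variable {n : ℕ}

lemma aux_rpow_neg_inv {x : ℝ} (hn : 0 < n) (hx : 0 < x) :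
    (x ^ n) ^ (-(1 : ℝ) / n) = x⁻¹ := by
  have hn' : (n : ℝ) ≠ 0 := Nat.cast_ne_zero.2 hn.ne'
  rw [← Real.rpow_natCast x n, ← Real.rpow_mul hx.le,
    show (n : ℝ) * (-(1 : ℝ) / n) = -1 by field_simp, Real.rpow_neg_one]

lemma aux_rpow_root {x : ℝ} (hn : 0 < n) (hx : 0 < x) :
    (x ^ n) ^ ((1 : ℝ) / n) = x := by
  have hn' : (n : ℝ) ≠ 0 := Nat.cast_ne_zero.2 hn.ne'
  rw [← Real.rpow_natCast x n, ← Real.rpow_mul hx.le,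
    show (n : ℝ) * ((1 : ℝ) / n) = 1 by field_simp, Real.rpow_one]

lemma aux_rpow_div_neg {a b : ℝ} (ha : 0 < a) (hb : 0 < b) :
    (a / b) ^ (-(1 : ℝ) / (n : ℝ)) = (b / a) ^ ((1 : ℝ) / (n : ℝ)) := by
  have h : (0:ℝ) ≤ a / b := (div_pos ha hb).le
  rw [neg_div, Real.rpow_neg h, ← Real.inv_rpow h, inv_div]

/-- The spherical measure is positive on open sets when `n > 0`. -/
lemma sphereMeasure_isOpenPosMeasure (hn : 0 < n) :
    (sphereMeasure n).IsOpenPosMeasure := by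
  constructor
  intro U hU hne
  rw [sphereMeasure, MeasureTheory.Measure.toSphere_apply' _ hU.measurableSet]
  refine mul_ne_zero ?_ ?_
  · simp [finrank_euclideanSpace_fin, hn.ne']
  · set E := EuclideanSpace ℝ (Fin n)
    obtain ⟨t, ht, hUt⟩ := isOpen_induced_iff.1 hU
    set g : E → E := fun x => ‖x‖⁻¹ • x with hg
    have hset : (Ioo (0:ℝ) 1) • (Subtype.val '' U) =
        ((g ⁻¹' t ∩ {(0:E)}ᶜ) ∩ ball (0:E) 1) := by
      ext x
      constructor
      · rintro ⟨r, hr, v, hv, rfl⟩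
        obtain ⟨u, huU, rfl⟩ := hv
        have hu1 : ‖(u : E)‖ = 1 := mem_sphere_zero_iff_norm.mp u.2
        have hnorm : ‖r • (u : E)‖ = r := by
          rw [norm_smul, hu1, mul_one, Real.norm_eq_abs, abs_of_pos hr.1]
        have hx0 : r • (u : E) ≠ 0 := by
          intro h; rw [h, norm_zero] at hnorm; exact hr.1.ne hnorm
        refine ⟨⟨?_, hx0⟩, ?_⟩
        · have : g (r • (u : E)) = (u : E) := by
            rw [hg]; simp only [hnorm]
            rw [smul_smul, inv_mul_cancel₀ hr.1.ne', one_smul]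
          rw [Set.mem_preimage, this]
          have : u ∈ Subtype.val ⁻¹' t := hUt ▸ huU
          exact this
        · rw [mem_ball_zero_iff, hnorm]; exact hr.2
      · rintro ⟨⟨hxt, hx0⟩, hxb⟩
        have hx0' : x ≠ 0 := hx0
        have hnx : 0 < ‖x‖ := norm_pos_iff.2 hx0'
        refine ⟨‖x‖, ⟨hnx, mem_ball_zero_iff.mp hxb⟩, g x, ?_, ?_⟩
        · have hgx : ‖g x‖ = 1 := by
            rw [hg]; simp only [norm_smul, norm_inv, norm_norm]
            rw [Real.norm_eq_abs, abs_of_pos hnx]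
            exact inv_mul_cancel₀ hnx.ne'
          have hmem : g x ∈ sphere (0:E) 1 := mem_sphere_zero_iff_norm.mpr hgx
          refine ⟨⟨g x, hmem⟩, ?_, rfl⟩
          rw [← hUt]; exact hxt
        · show ‖x‖ • (‖x‖⁻¹ • x) = x
          rw [smul_smul, mul_inv_cancel₀ hnx.ne', one_smul]
    rw [hset]
    have hcont : ContinuousOn g {(0:E)}ᶜ := by
      rw [hg]
      refine ContinuousOn.smul (f := fun x : E => ‖x‖⁻¹) (g := fun x : E => x) ?_ ?_
      · exact (continuous_norm.continuousOn).inv₀ fun x hx =>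
          norm_ne_zero_iff.2 hx
      · exact continuous_id.continuousOn
    have hopen : IsOpen (g ⁻¹' t ∩ {(0:E)}ᶜ) := by
      have := hcont.isOpen_inter_preimage isOpen_compl_singleton ht
      rwa [Set.inter_comm] at this
    refine ((hopen.inter isOpen_ball).measure_ne_zero volume ?_)
    obtain ⟨u, huU⟩ := hne
    have hu1 : ‖(u : E)‖ = 1 := mem_sphere_zero_iff_norm.mp u.2
    refine ⟨(2⁻¹ : ℝ) • (u : E), ⟨⟨?_, ?_⟩, ?_⟩⟩
    · have hnorm : ‖(2⁻¹ : ℝ) • (u : E)‖ = 2⁻¹ := by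
        rw [norm_smul, hu1, mul_one, Real.norm_eq_abs]; norm_num
      have : g ((2⁻¹ : ℝ) • (u : E)) = (u : E) := by
        rw [hg]; simp only [hnorm]
        rw [smul_smul]; norm_num
      rw [Set.mem_preimage, this]
      have : u ∈ Subtype.val ⁻¹' t := hUt ▸ huU
      exact this
    · simp only [Set.mem_compl_iff, Set.mem_singleton_iff]
      intro h
      have := congrArg norm h
      rw [norm_smul, hu1, mul_one, norm_zero, Real.norm_eq_abs] at this
      norm_num at this
    · rw [mem_ball_zero_iff, norm_smul, hu1, mul_one, Real.norm_eq_abs, abs_of_pos] <;> norm_num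

instance sphereMeasure_finite (n : ℕ) : IsFiniteMeasure (sphereMeasure n) := by
  unfold sphereMeasure; infer_instance

lemma StarBody.contS (K : StarBody n) :
    Continuous (fun u : sphere (0 : EuclideanSpace ℝ (Fin n)) 1 => K.ρ u) :=
  K.cont.restrict

lemma StarBody.posS (K : StarBody n) (u : sphere (0 : EuclideanSpace ℝ (Fin n)) 1) :
    0 < K.ρ u := K.pos u (mem_sphere_zero_iff_norm.mp u.2)

lemma sphere_nonempty' (hn : 0 < n) :
    Nonempty (sphere (0 : EuclideanSpace ℝ (Fin n)) 1) := by
  have : Nontrivial (EuclideanSpace ℝ (Fin n)) :=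
    Module.nontrivial_of_finrank_pos (R := ℝ) (by rw [finrank_euclideanSpace_fin]; exact hn)
  exact (NormedSpace.sphere_nonempty.mpr zero_le_one).to_subtype

lemma integrable_of_continuous_sphere {β : Type*} [NormedAddCommGroup β]
    {f : sphere (0 : EuclideanSpace ℝ (Fin n)) 1 → β}
    (μ : Measure (sphere (0 : EuclideanSpace ℝ (Fin n)) 1)) [IsFiniteMeasure μ]
    (hf : Continuous f) : Integrable f μ :=
  hf.integrable_of_hasCompactSupport (HasCompactSupport.of_compactSpace f)

lemma integral_pow_pos (hn : 0 < n) (K : StarBody n) :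
    0 < ∫ u : sphere (0 : EuclideanSpace ℝ (Fin n)) 1,
      (K.ρ u) ^ n ∂(sphereMeasure n) := by
  haveI := sphere_nonempty' hn
  haveI := (sphereMeasure_isOpenPosMeasure hn)
  obtain ⟨u₀, -, hu₀'⟩ := isCompact_univ.exists_isMinOn univ_nonempty
    ((K.contS).continuousOn (s := univ))
  have hu₀ : ∀ u : sphere (0 : EuclideanSpace ℝ (Fin n)) 1, K.ρ u₀ ≤ K.ρ u :=
    fun u => hu₀' (mem_univ u)
  have hm : 0 < K.ρ u₀ := K.posS u₀
  have hmono : ∀ u : sphere (0 : EuclideanSpace ℝ (Fin n)) 1,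
      (K.ρ u₀) ^ n ≤ (K.ρ u) ^ n := fun u =>
    pow_le_pow_left₀ hm.le (hu₀ u) n
  have hint : Integrable (fun u : sphere (0 : EuclideanSpace ℝ (Fin n)) 1 =>
      (K.ρ u) ^ n) (sphereMeasure n) :=
    integrable_of_continuous_sphere _ (K.contS.pow n)
  have h1 : ((sphereMeasure n) univ).toReal * (K.ρ u₀) ^ n ≤ _ :=
    (integral_mono (integrable_const _) hint hmono).trans_eq' (by
      rw [integral_const, smul_eq_mul]; rfl)
  refine lt_of_lt_of_le ?_ h1
  apply mul_pos ?_ (pow_pos hm n)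
  rw [ENNReal.toReal_pos_iff]
  refine ⟨?_, measure_lt_top _ _⟩
  rw [pos_iff_ne_zero]
  exact isOpen_univ.measure_ne_zero _ univ_nonempty

end Aux

theorem dual_orlicz_brunn_minkowski_eq {n : ℕ} (hn : 0 < n) (φ : ℝ → ℝ → ℝ)
    (hφ : IsPhi2 φ)
    (hconv : StrictConvexOn ℝ (Set.Ioi 0 ×ˢ Set.Ioi 0)
      (fun p : ℝ × ℝ => φ (p.1 ^ (-(1 : ℝ) / n)) (p.2 ^ (-(1 : ℝ) / n))))
    (K L M : StarBody n) (hM : IsOrliczSum φ K L M) :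
    φ ((M.vol / K.vol) ^ ((1 : ℝ) / n)) ((M.vol / L.vol) ^ ((1 : ℝ) / n)) = 1 ↔
      ∃ lam : ℝ, 0 < lam ∧
        ∀ u : EuclideanSpace ℝ (Fin n), ‖u‖ = 1 → L.ρ u = lam * K.ρ u := by
  classical
  haveI hnemp := sphere_nonempty' hn
  haveI hop := sphereMeasure_isOpenPosMeasure hn
  have hn' : (n : ℝ) ≠ 0 := Nat.cast_ne_zero.2 hn.ne'
  set IK := ∫ u : sphere (0 : EuclideanSpace ℝ (Fin n)) 1,
      (K.ρ u) ^ n ∂(sphereMeasure n) with hIKdef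
  set IL := ∫ u : sphere (0 : EuclideanSpace ℝ (Fin n)) 1,
      (L.ρ u) ^ n ∂(sphereMeasure n) with hILdef
  set IM := ∫ u : sphere (0 : EuclideanSpace ℝ (Fin n)) 1,
      (M.ρ u) ^ n ∂(sphereMeasure n) with hIMdef
  have hIK : 0 < IK := integral_pow_pos hn K
  have hIL : 0 < IL := integral_pow_pos hn L
  have hIM : 0 < IM := integral_pow_pos hn M
  have hKvol : K.vol = 1 / (n : ℝ) * IK := rfl
  have hLvol : L.vol = 1 / (n : ℝ) * IL := rfl
  have hMvol : M.vol = 1 / (n : ℝ) * IM := rfl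
  have hfrac : (1 : ℝ) / n ≠ 0 := by positivity
  have hMK : M.vol / K.vol = IM / IK := by
    rw [hMvol, hKvol, mul_div_mul_left _ _ hfrac]
  have hML : M.vol / L.vol = IM / IL := by
    rw [hMvol, hLvol, mul_div_mul_left _ _ hfrac]
  set g : ℝ × ℝ → ℝ :=
    fun p : ℝ × ℝ => φ (p.1 ^ (-(1 : ℝ) / n)) (p.2 ^ (-(1 : ℝ) / n)) with hgdef
  have hgval : g (IK / IM, IL / IM) =
      φ ((M.vol / K.vol) ^ ((1 : ℝ) / n)) ((M.vol / L.vol) ^ ((1 : ℝ) / n)) := by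
    rw [hMK, hML, hgdef]
    simp only
    rw [aux_rpow_div_neg hIK hIM, aux_rpow_div_neg hIL hIM]
  rw [← hgval]
  constructor
  · -- equality implies dilates
    intro h1
    set d : sphere (0 : EuclideanSpace ℝ (Fin n)) 1 → ℝ≥0 :=
      fun u => Real.toNNReal ((M.ρ u) ^ n) with hddef
    have hdmeas : Measurable d := ((M.contS.pow n).measurable).real_toNNReal
    set ν := (sphereMeasure n).withDensity (fun u => (d u : ℝ≥0∞)) with hνdef
    haveI hνfin : IsFiniteMeasure ν := by
      rw [hνdef]
      apply isFiniteMeasure_withDensity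
      obtain ⟨u₁, -, hu₁⟩ := isCompact_univ.exists_isMaxOn univ_nonempty
        ((M.contS.pow n).continuousOn)
      have hb : ∀ u : sphere (0 : EuclideanSpace ℝ (Fin n)) 1,
          (d u : ℝ≥0∞) ≤ (d u₁ : ℝ≥0∞) := fun u => by
        simp only [ENNReal.coe_le_coe, hddef]
        exact Real.toNNReal_mono (hu₁ (mem_univ u))
      exact ne_top_of_le_ne_top
        (ENNReal.mul_ne_top ENNReal.coe_ne_top (measure_ne_top _ _))
        ((lintegral_mono hb).trans_eq (lintegral_const _))
    have hsmul : ∀ (u) (x : ℝ), d u • x = (M.ρ u) ^ n * x := fun u x => by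
      rw [NNReal.smul_def, Real.coe_toNNReal _ (pow_nonneg (M.posS u).le n), smul_eq_mul]
    have h2 : ∫ u, (1 : ℝ) ∂ν = IM := by
      rw [hνdef, integral_withDensity_eq_integral_smul hdmeas, hIMdef]
      congr 1; funext u; rw [hsmul, mul_one]
    have hν1 : (ν univ).toReal = IM := by
      rw [← h2, integral_const, smul_eq_mul, mul_one]; rfl
    haveI : NeZero ν := by
      refine ⟨fun h => ?_⟩
      rw [h] at hν1
      simp only [Measure.coe_zero, Pi.zero_apply, ENNReal.toReal_zero] at hν1
      exact absurd hν1.symm hIM.ne'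
    set f : sphere (0 : EuclideanSpace ℝ (Fin n)) 1 → ℝ × ℝ :=
      fun u => ((K.ρ u / M.ρ u) ^ n, (L.ρ u / M.ρ u) ^ n) with hfdef
    have hq1c : Continuous fun u : sphere (0 : EuclideanSpace ℝ (Fin n)) 1 =>
        (K.ρ u / M.ρ u) ^ n :=
      (K.contS.div M.contS fun u => (M.posS u).ne').pow n
    have hq2c : Continuous fun u : sphere (0 : EuclideanSpace ℝ (Fin n)) 1 =>
        (L.ρ u / M.ρ u) ^ n :=
      (L.contS.div M.contS fun u => (M.posS u).ne').pow n
    have hfcont : Continuous f := hq1c.prodMk hq2c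
    have hfint : Integrable f ν := integrable_of_continuous_sphere ν hfcont
    have hKint : Integrable (fun u : sphere (0 : EuclideanSpace ℝ (Fin n)) 1 =>
        (K.ρ u) ^ n) (sphereMeasure n) := integrable_of_continuous_sphere _ (K.contS.pow n)
    have hLint : Integrable (fun u : sphere (0 : EuclideanSpace ℝ (Fin n)) 1 =>
        (L.ρ u) ^ n) (sphereMeasure n) := integrable_of_continuous_sphere _ (L.contS.pow n)
    have hintf : ∫ u, f u ∂ν = (IK, IL) := by
      rw [hνdef, integral_withDensity_eq_integral_smul hdmeas]
      have heq : (fun u => d u • f u) =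
          fun u : sphere (0 : EuclideanSpace ℝ (Fin n)) 1 =>
            ((K.ρ u) ^ n, (L.ρ u) ^ n) := by
        funext u
        have hM0 : (M.ρ u : ℝ) ^ n ≠ 0 := pow_ne_zero n (M.posS u).ne'
        have e : ∀ a : ℝ, M.ρ u ^ n * (a / M.ρ u) ^ n = a ^ n := fun a => by
          rw [div_pow, mul_comm, div_mul_cancel₀ _ hM0]
        show (d u • (K.ρ u / M.ρ u) ^ n, d u • (L.ρ u / M.ρ u) ^ n) = _
        rw [hsmul, hsmul, e, e]
      rw [heq, integral_pair hKint hLint, hIKdef, hILdef]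
    have havg : ⨍ u, f u ∂ν = (IK / IM, IL / IM) := by
      rw [average_eq, measureReal_def, hν1, hintf, Prod.smul_mk, smul_eq_mul, smul_eq_mul,
        inv_mul_eq_div, inv_mul_eq_div]
    obtain ⟨ua, -, hua'⟩ := isCompact_univ.exists_isMinOn univ_nonempty
      ((hq1c.min hq2c).continuousOn)
    obtain ⟨ub, -, hub'⟩ := isCompact_univ.exists_isMaxOn univ_nonempty
      ((hq1c.max hq2c).continuousOn)
    set m := min ((K.ρ ua / M.ρ ua) ^ n) ((L.ρ ua / M.ρ ua) ^ n) with hmdef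
    set B := max ((K.ρ ub / M.ρ ub) ^ n) ((L.ρ ub / M.ρ ub) ^ n) with hBdef
    have hm : 0 < m :=
      lt_min (pow_pos (div_pos (K.posS ua) (M.posS ua)) n)
        (pow_pos (div_pos (L.posS ua) (M.posS ua)) n)
    have hmem : ∀ u, f u ∈ Icc m B ×ˢ Icc m B := by
      intro u
      have h₁ := hua' (mem_univ u)
      have h₂ := hub' (mem_univ u)
      simp only [IsMinOn, IsMaxOn] at h₁ h₂
      refine ⟨⟨?_, ?_⟩, ?_, ?_⟩
      · exact le_trans h₁ (min_le_left _ _)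
      · exact le_trans (le_max_left _ _) h₂
      · exact le_trans h₁ (min_le_right _ _)
      · exact le_trans (le_max_right _ _) h₂
    have hsub : Icc m B ×ˢ Icc m B ⊆ Ioi (0 : ℝ) ×ˢ Ioi (0 : ℝ) := by
      rintro ⟨x, y⟩ ⟨⟨hx, -⟩, ⟨hy, -⟩⟩
      exact ⟨lt_of_lt_of_le hm hx, lt_of_lt_of_le hm hy⟩
    have hconv' : StrictConvexOn ℝ (Icc m B ×ˢ Icc m B) g :=
      hconv.subset hsub ((convex_Icc _ _).prod (convex_Icc _ _))
    have hgcont : ContinuousOn g (Icc m B ×ˢ Icc m B) := by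
      have hc1 : ContinuousOn
          (fun p : ℝ × ℝ => (p.1 ^ (-(1 : ℝ) / n), p.2 ^ (-(1 : ℝ) / n)))
          (Icc m B ×ˢ Icc m B) := by
        apply ContinuousOn.prodMk
        · exact (continuous_fst.continuousOn).rpow_const fun p hp =>
            Or.inl (ne_of_gt (lt_of_lt_of_le hm hp.1.1))
        · exact (continuous_snd.continuousOn).rpow_const fun p hp =>
            Or.inl (ne_of_gt (lt_of_lt_of_le hm hp.2.1))
      have hmaps : MapsTo (fun p : ℝ × ℝ => (p.1 ^ (-(1 : ℝ) / n), p.2 ^ (-(1 : ℝ) / n)))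
          (Icc m B ×ˢ Icc m B) (Ici (0 : ℝ) ×ˢ Ici (0 : ℝ)) := by
        rintro ⟨x, y⟩ ⟨⟨hx, -⟩, ⟨hy, -⟩⟩
        exact ⟨Real.rpow_nonneg (hm.le.trans hx) _, Real.rpow_nonneg (hm.le.trans hy) _⟩
      exact (hφ.1.comp hc1 hmaps : _)
    have hgf : ∀ u, g (f u) = 1 := by
      intro u
      have hKM : 0 < K.ρ u / M.ρ u := div_pos (K.posS u) (M.posS u)
      have hLM : 0 < L.ρ u / M.ρ u := div_pos (L.posS u) (M.posS u)
      show φ (((K.ρ u / M.ρ u) ^ n) ^ (-(1 : ℝ) / n))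
          (((L.ρ u / M.ρ u) ^ n) ^ (-(1 : ℝ) / n)) = 1
      rw [aux_rpow_neg_inv hn hKM, aux_rpow_neg_inv hn hLM, inv_div, inv_div]
      exact hM u (mem_sphere_zero_iff_norm.mp u.2)
    have hgfint : Integrable (g ∘ f) ν := by
      have hcst : g ∘ f = fun _ => (1 : ℝ) := funext hgf
      rw [hcst]; exact integrable_const _
    have havg2 : ⨍ u, g (f u) ∂ν = 1 := by
      simp only [hgf]
      exact average_const _ _
    rcases hconv'.ae_eq_const_or_map_average_lt hgcont
        (isClosed_Icc.prod isClosed_Icc) (ae_of_all _ hmem) hfint hgfint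
      with hae | hlt
    · have hac : sphereMeasure n ≪ ν := by
        rw [hνdef]
        refine withDensity_absolutelyContinuous'
          (hdmeas.coe_nnreal_ennreal.aemeasurable) ?_
        refine ae_of_all _ fun u => ?_
        simp only [ne_eq, ENNReal.coe_eq_zero, hddef]
        exact (Real.toNNReal_pos.mpr (pow_pos (M.posS u) n)).ne'
      have hae' := hac.ae_eq hae
      have heq := (hfcont.ae_eq_iff_eq (sphereMeasure n) continuous_const).mp hae'
      obtain ⟨u₀⟩ := hnemp
      have hpt : ∀ u, f u = (IK / IM, IL / IM) := by
        intro u; rw [← havg]; exact congrFun heq u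
      have hKrat : ∀ u : sphere (0 : EuclideanSpace ℝ (Fin n)) 1,
          K.ρ u / M.ρ u = K.ρ u₀ / M.ρ u₀ := by
        intro u
        have e1 : (K.ρ u / M.ρ u) ^ n = (K.ρ u₀ / M.ρ u₀) ^ n := by
          have ha := congrArg Prod.fst (hpt u)
          have hb := congrArg Prod.fst (hpt u₀)
          simpa [hfdef] using ha.trans hb.symm
        exact (pow_left_strictMonoOn₀ hn.ne').injOn
          (div_nonneg (K.posS u).le (M.posS u).le)
          (div_nonneg (K.posS u₀).le (M.posS u₀).le) e1
      have hLrat : ∀ u : sphere (0 : EuclideanSpace ℝ (Fin n)) 1,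
          L.ρ u / M.ρ u = L.ρ u₀ / M.ρ u₀ := by
        intro u
        have e1 : (L.ρ u / M.ρ u) ^ n = (L.ρ u₀ / M.ρ u₀) ^ n := by
          have ha := congrArg Prod.snd (hpt u)
          have hb := congrArg Prod.snd (hpt u₀)
          simpa [hfdef] using ha.trans hb.symm
        exact (pow_left_strictMonoOn₀ hn.ne').injOn
          (div_nonneg (L.posS u).le (M.posS u).le)
          (div_nonneg (L.posS u₀).le (M.posS u₀).le) e1
      refine ⟨L.ρ u₀ / K.ρ u₀, div_pos (L.posS u₀) (K.posS u₀), ?_⟩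
      intro u hu
      have huS : u ∈ sphere (0 : EuclideanSpace ℝ (Fin n)) 1 :=
        mem_sphere_zero_iff_norm.mpr hu
      set v : sphere (0 : EuclideanSpace ℝ (Fin n)) 1 := ⟨u, huS⟩ with hvdef
      have hMv : (0 : ℝ) < M.ρ u := M.posS v
      have hM0' : (0 : ℝ) < M.ρ u₀ := M.posS u₀
      have hK0' : (0 : ℝ) < K.ρ u₀ := K.posS u₀
      have eK : K.ρ u * M.ρ u₀ = K.ρ u₀ * M.ρ u :=
        (div_eq_div_iff hMv.ne' hM0'.ne').mp (hKrat v)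
      have eL : L.ρ u * M.ρ u₀ = L.ρ u₀ * M.ρ u :=
        (div_eq_div_iff hMv.ne' hM0'.ne').mp (hLrat v)
      have hgoal : L.ρ u * K.ρ u₀ = L.ρ u₀ * K.ρ u := by
        apply mul_right_cancel₀ hM0'.ne'
        linear_combination (K.ρ (u₀ : EuclideanSpace ℝ (Fin n))) * eL -
          (L.ρ (u₀ : EuclideanSpace ℝ (Fin n))) * eK
      rw [div_mul_eq_mul_div, eq_div_iff hK0'.ne']
      linarith [hgoal]
    · exfalso
      rw [havg, havg2] at hlt
      exact absurd h1 hlt.ne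
  · -- dilates implies equality
    rintro ⟨lam, hlam, hLK⟩
    -- strict monotonicity of ψ(x) = φ(x, x/lam)
    have hψmono : ∀ a b : ℝ, 0 ≤ a → 0 ≤ b → a < b → φ a (a / lam) < φ b (b / lam) := by
      intro a b ha hb hab
      have hdiv : a / lam < b / lam := by gcongr
      have h1 : φ a (a / lam) < φ b (a / lam) :=
        hφ.2.1 (a / lam) (by positivity) (mem_Ici.mpr ha) (mem_Ici.mpr hb) hab
      have h2 : φ b (a / lam) < φ b (b / lam) :=
        hφ.2.2.1 b hb (mem_Ici.mpr (by positivity)) (mem_Ici.mpr (by positivity)) hdiv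
      linarith
    have hinj : ∀ a b : ℝ, 0 ≤ a → 0 ≤ b →
        φ a (a / lam) = 1 → φ b (b / lam) = 1 → a = b := by
      intro a b ha hb h1 h2
      rcases lt_trichotomy a b with h | h | h
      · exact absurd (h1.trans h2.symm) (hψmono a b ha hb h).ne
      · exact h
      · exact absurd (h2.trans h1.symm) (hψmono b a hb ha h).ne
    obtain ⟨u₀⟩ := hnemp
    have hψ1 : ∀ u : sphere (0 : EuclideanSpace ℝ (Fin n)) 1,
        φ (M.ρ u / K.ρ u) (M.ρ u / K.ρ u / lam) = 1 := by
      intro u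
      have h := hM u (mem_sphere_zero_iff_norm.mp u.2)
      have hLu : L.ρ u = lam * K.ρ u := hLK u (mem_sphere_zero_iff_norm.mp u.2)
      rwa [hLu, div_mul_eq_div_div_swap] at h
    set c : ℝ := M.ρ u₀ / K.ρ u₀ with hcdef
    have hc : 0 < c := div_pos (M.posS u₀) (K.posS u₀)
    have hcu : ∀ u : sphere (0 : EuclideanSpace ℝ (Fin n)) 1, M.ρ u = c * K.ρ u := by
      intro u
      have he : M.ρ u / K.ρ u = c :=
        hinj _ _ (div_nonneg (M.posS u).le (K.posS u).le) hc.le (hψ1 u) (hψ1 u₀)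
      rw [← he, div_mul_cancel₀ _ (K.posS u).ne']
    have hIMc : IM = c ^ n * IK := by
      rw [hIMdef, hIKdef, ← integral_const_mul _ _]
      congr 1
      funext u
      rw [hcu u, mul_pow]
    have hILc : IL = lam ^ n * IK := by
      rw [hILdef, hIKdef, ← integral_const_mul _ _]
      congr 1
      funext u
      rw [hLK u (mem_sphere_zero_iff_norm.mp u.2), mul_pow]
    have e1 : IK / IM = (c⁻¹) ^ n := by
      rw [hIMc, inv_pow]
      field_simp
    have e2 : IL / IM = (lam / c) ^ n := by
      rw [hIMc, hILc, mul_div_mul_right _ _ hIK.ne']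
      exact (div_pow lam c n).symm
    rw [hgdef]
    simp only
    rw [e1, e2, aux_rpow_neg_inv hn (inv_pos.mpr hc),
      aux_rpow_neg_inv hn (div_pos hlam hc), inv_inv, inv_div]
    exact hψ1 u₀
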